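/- Let C be a pointed, spanning polyhedral cone in E = ℝⁿ, let D ⊆ E be a downset, and let σ be a face of C. Then {a ∈ E | a − σ° ⊆ D} = ⋃_{x ∈ E} closure(D ∩ (x + span_ℝ σ)), where span_ℝ σ is the linear span of σ and the closure is the topological closure in E. -/

import Mathlib

open Pointwise

/-- A polyhedral cone in `ℝⁿ`: an intersection of finitely many closed linear half-spaces. -/
def IsPolyCone {n : ℕ} (C : Set (Fin n → ℝ)) : Prop :=
  ∃ (m : ℕ) (ℓ : Fin m → ((Fin n → ℝ) →ₗ[ℝ] ℝ)), C = {x | ∀ i, 0 ≤ ℓ i x}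

/-- A face of a cone `C`: a subset of `C` containing `0`, closed under addition, and such
that whenever `x, y ∈ C` and `x + y` lies in the subset, both `x` and `y` do. -/
def IsConeFace {M : Type*} [AddCommMonoid M] (σ C : Set M) : Prop :=
  σ ⊆ C ∧ (0 : M) ∈ σ ∧ (∀ x ∈ σ, ∀ y ∈ σ, x + y ∈ σ) ∧
    ∀ x ∈ C, ∀ y ∈ C, x + y ∈ σ → x ∈ σ ∧ y ∈ σ

/-- A downset for the partial order `x ≼ y ↔ y - x ∈ C`. -/
def IsDownset {n : ℕ} (C D : Set (Fin n → ℝ)) : Prop :=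
  ∀ x y : Fin n → ℝ, y ∈ D → y - x ∈ C → x ∈ D

/-- The upper boundary downset `D^σ = {a | a - σ° ⊆ D}`. -/
def upSet {n : ℕ} (D σ : Set (Fin n → ℝ)) : Set (Fin n → ℝ) :=
  {a | ∀ s ∈ intrinsicInterior ℝ σ, a - s ∈ D}

/-- `a` is a cogenerator of the downset `D` along the face `τ` with nadir `σ`:
`(a + C) ∩ D^σ = a + τ` and no face `σ''` with `τ ⊆ σ'' ⊊ σ` satisfies `a - σ''° ⊆ D`. -/
def IsCogen {n : ℕ} (C D τ σ : Set (Fin n → ℝ)) (a : Fin n → ℝ) : Prop :=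
  (({a} + C) ∩ upSet D σ = {a} + τ) ∧
  ∀ σ'' : Set (Fin n → ℝ), IsConeFace σ'' C → τ ⊆ σ'' → σ'' ⊂ σ →
    ¬ (∀ s ∈ intrinsicInterior ℝ σ'', a - s ∈ D)

/-- A `σ`-vicinity of a point `p` of `E ⧸ span τ`: the image under the quotient map of
`u + σ° + C` for some `u` admitting a representative `w` of `p` with `w - u ∈ σ°`. -/
def IsVic {n : ℕ} (C σ τ : Set (Fin n → ℝ))
    (p : (Fin n → ℝ) ⧸ Submodule.span ℝ τ)
    (V : Set ((Fin n → ℝ) ⧸ Submodule.span ℝ τ)) : Prop :=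
  ∃ u w : Fin n → ℝ, (Submodule.span ℝ τ).mkQ w = p ∧
    w - u ∈ intrinsicInterior ℝ σ ∧
    V = (Submodule.span ℝ τ).mkQ '' ({u} + intrinsicInterior ℝ σ + C)


open Pointwise

section Aux

variable {n : ℕ}

private lemma mem_II_iff {σ : Set (Fin n → ℝ)} {x : Fin n → ℝ} :
    x ∈ intrinsicInterior ℝ σ ↔ x ∈ affineSpan ℝ σ ∧
      ∃ ε > 0, ∀ y ∈ affineSpan ℝ σ, dist y x < ε → y ∈ σ := by
  constructor
  · rintro ⟨y, hy, rfl⟩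
    refine ⟨y.2, ?_⟩
    rw [mem_interior_iff_mem_nhds, Metric.mem_nhds_iff] at hy
    obtain ⟨ε, hε, hball⟩ := hy
    refine ⟨ε, hε, fun z hz hd => ?_⟩
    have : (⟨z, hz⟩ : affineSpan ℝ σ) ∈ Metric.ball y ε := by
      simpa [Metric.mem_ball, Subtype.dist_eq] using hd
    exact hball this
  · rintro ⟨hx, ε, hε, h⟩
    refine ⟨⟨x, hx⟩, ?_, rfl⟩
    rw [mem_interior_iff_mem_nhds, Metric.mem_nhds_iff]
    refine ⟨ε, hε, fun z hz => ?_⟩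
    exact h z z.2 (by simpa [Metric.mem_ball, Subtype.dist_eq] using hz)

private lemma coe_affineSpan_eq {σ : Set (Fin n → ℝ)} (h0 : (0 : Fin n → ℝ) ∈ σ) :
    (affineSpan ℝ σ : Set (Fin n → ℝ)) = (Submodule.span ℝ σ : Set (Fin n → ℝ)) := by
  have h1 : insert (0 : Fin n → ℝ) σ = σ := Set.insert_eq_self.mpr h0
  calc (affineSpan ℝ σ : Set (Fin n → ℝ))
      = (affineSpan ℝ (insert 0 σ) : Set (Fin n → ℝ)) := by rw [h1]
    _ = (Submodule.span ℝ σ : Set (Fin n → ℝ)) := affineSpan_insert_zero σ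

private lemma polyCone_smul {C : Set (Fin n → ℝ)} (hC : IsPolyCone C)
    {t : ℝ} (ht : 0 ≤ t) {x : Fin n → ℝ} (hx : x ∈ C) : t • x ∈ C := by
  obtain ⟨m, ℓ, rfl⟩ := hC
  intro i
  have := hx i
  simp only [map_smul, smul_eq_mul]
  exact mul_nonneg ht this

private lemma face_smul {C σ : Set (Fin n → ℝ)} (hC : IsPolyCone C) (hσ : IsConeFace σ C)
    {t : ℝ} (ht : 0 ≤ t) {x : Fin n → ℝ} (hx : x ∈ σ) : t • x ∈ σ := by
  obtain ⟨hsub, h0, hadd, hface⟩ := hσ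
  have hnat : ∀ k : ℕ, ∀ y ∈ σ, (k : ℝ) • y ∈ σ := by
    intro k
    induction k with
    | zero => intro y hy; simpa using h0
    | succ k ih =>
      intro y hy
      have : ((k + 1 : ℕ) : ℝ) • y = (k : ℝ) • y + y := by
        push_cast
        rw [add_smul, one_smul]
      rw [this]
      exact hadd _ (ih y hy) _ hy
  have hunit : ∀ s : ℝ, 0 < s → s ≤ 1 → ∀ y ∈ σ, s • y ∈ σ := by
    intro s hs hs1 y hy
    have hyC : y ∈ C := hsub hy
    have h1 : s • y ∈ C := polyCone_smul hC hs.le hyC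
    have h2 : (1 - s) • y ∈ C := polyCone_smul hC (by linarith) hyC
    have h3 : s • y + (1 - s) • y ∈ σ := by
      rw [← add_smul]
      simpa using hy
    exact (hface _ h1 _ h2 h3).1
  rcases eq_or_lt_of_le ht with rfl | ht'
  · simpa using h0
  · set k : ℕ := ⌈t⌉₊ with hk
    have hkpos : 0 < (k : ℝ) := by
      have : 0 < k := Nat.ceil_pos.mpr ht'
      exact_mod_cast this
    have htk : t / k ≤ 1 := by
      rw [div_le_one hkpos]
      exact Nat.le_ceil t
    have h1 : (t / k) • x ∈ σ := hunit _ (div_pos ht' hkpos) htk x hx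
    have : (k : ℝ) • ((t / k) • x) = t • x := by
      rw [smul_smul, mul_div_cancel₀ _ hkpos.ne']
    rw [← this]
    exact hnat k _ h1

private lemma face_convex {C σ : Set (Fin n → ℝ)} (hC : IsPolyCone C) (hσ : IsConeFace σ C) :
    Convex ℝ σ := by
  intro x hx y hy a b ha hb hab
  exact hσ.2.2.1 _ (face_smul hC hσ ha hx) _ (face_smul hC hσ hb hy)

/-- positive scalings stay in the intrinsic interior -/
private lemma II_smul {C σ : Set (Fin n → ℝ)} (hC : IsPolyCone C) (hσ : IsConeFace σ C)
    {t : ℝ} (ht : 0 < t) {x : Fin n → ℝ} (hx : x ∈ intrinsicInterior ℝ σ) :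
    t • x ∈ intrinsicInterior ℝ σ := by
  have h0 : (0 : Fin n → ℝ) ∈ σ := hσ.2.1
  have hAS := coe_affineSpan_eq h0
  have hASmem : ∀ z : Fin n → ℝ, z ∈ affineSpan ℝ σ ↔ z ∈ Submodule.span ℝ σ := by
    intro z
    constructor
    · intro h; have : z ∈ (affineSpan ℝ σ : Set (Fin n → ℝ)) := h
      rw [hAS] at this; exact this
    · intro h; have : z ∈ (Submodule.span ℝ σ : Set (Fin n → ℝ)) := h
      rw [← hAS] at this; exact this
  rw [mem_II_iff] at hx ⊢
  obtain ⟨hxA, ε, hε, h⟩ := hx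
  refine ⟨(hASmem _).mpr (Submodule.smul_mem _ _ ((hASmem _).mp hxA)), t * ε,
    mul_pos ht hε, fun y hy hd => ?_⟩
  have hyA : y ∈ Submodule.span ℝ σ := (hASmem _).mp hy
  have hz : t⁻¹ • y ∈ affineSpan ℝ σ := (hASmem _).mpr (Submodule.smul_mem _ _ hyA)
  have hdz : dist (t⁻¹ • y) x < ε := by
    rw [dist_eq_norm] at hd ⊢
    have : t⁻¹ • y - x = t⁻¹ • (y - t • x) := by
      rw [smul_sub, smul_smul, inv_mul_cancel₀ ht.ne', one_smul]
    rw [this, norm_smul, norm_inv, Real.norm_of_nonneg ht.le]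
    rw [inv_mul_lt_iff₀ ht]
    exact hd
  have := h _ hz hdz
  have := face_smul hC hσ ht.le this
  rwa [smul_smul, mul_inv_cancel₀ ht.ne', one_smul] at this

end Aux

/-- `{a | a - σ° ⊆ D}` is the union over `x ∈ E` of the closures of the
slices `D ∩ (x + span σ)`. -/
theorem upSet_eq_union_closures {n : ℕ} (C D σ : Set (Fin n → ℝ))
    (hC : IsPolyCone C) (hpointed : C ∩ (-C) = {0}) (hspan : C - C = Set.univ)
    (hD : IsDownset C D) (hσ : IsConeFace σ C) :
    upSet D σ =
      ⋃ x : Fin n → ℝ,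
        closure (D ∩ ({x} + (Submodule.span ℝ σ : Set (Fin n → ℝ)))) := by
  have h0 : (0 : Fin n → ℝ) ∈ σ := hσ.2.1
  have hAS := coe_affineSpan_eq h0
  have hASmem : ∀ z : Fin n → ℝ, z ∈ affineSpan ℝ σ ↔ z ∈ Submodule.span ℝ σ := by
    intro z
    constructor
    · intro h; have : z ∈ (affineSpan ℝ σ : Set (Fin n → ℝ)) := h
      rw [hAS] at this; exact this
    · intro h; have : z ∈ (Submodule.span ℝ σ : Set (Fin n → ℝ)) := h
      rw [← hAS] at this; exact this
  ext a
  constructor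
  · -- ⊆ : take x = a, approach a by a - t • s₀
    intro ha
    obtain ⟨s₀, hs₀⟩ := Set.Nonempty.intrinsicInterior (face_convex hC hσ) ⟨0, h0⟩
    refine Set.mem_iUnion.mpr ⟨a, ?_⟩
    rw [Metric.mem_closure_iff]
    intro ε hε
    set t : ℝ := ε / (‖s₀‖ + 1) with htdef
    have hnorm : (0:ℝ) < ‖s₀‖ + 1 := by positivity
    have ht : 0 < t := div_pos hε hnorm
    refine ⟨a - t • s₀, ⟨?_, ?_⟩, ?_⟩
    · exact ha _ (II_smul hC hσ ht hs₀)
    · refine ⟨a, rfl, -(t • s₀), ?_, by abel⟩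
      exact Submodule.neg_mem _ (Submodule.smul_mem _ _
        (Submodule.subset_span (intrinsicInterior_subset hs₀)))
    · rw [dist_eq_norm]
      have : a - (a - t • s₀) = t • s₀ := by module
      rw [this, norm_smul, Real.norm_of_nonneg ht.le]
      calc t * ‖s₀‖ < t * (‖s₀‖ + 1) := by
            exact mul_lt_mul_of_pos_left (by linarith) ht
        _ = ε := div_mul_cancel₀ _ hnorm.ne'
  · -- ⊇
    intro ha
    obtain ⟨x, hx⟩ := Set.mem_iUnion.mp ha
    -- a ∈ {x} + span σ
    have hclosed : IsClosed ({x} + (Submodule.span ℝ σ : Set (Fin n → ℝ))) := by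
      rw [Set.singleton_add]
      exact ((Homeomorph.addLeft x).isClosedMap _ (Submodule.span ℝ σ).closed_of_finiteDimensional)
    have haX : a ∈ {x} + (Submodule.span ℝ σ : Set (Fin n → ℝ)) := by
      have := closure_mono (Set.inter_subset_right) hx
      rwa [hclosed.closure_eq] at this
    intro s hs
    rw [mem_II_iff] at hs
    obtain ⟨hsA, ε, hε, hball⟩ := hs
    obtain ⟨d, ⟨hdD, hdX⟩, hdist⟩ := Metric.mem_closure_iff.mp hx ε hε
    -- d - a ∈ span σ
    obtain ⟨x1, hx1, v1, hv1, hda⟩ := haX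
    obtain ⟨x2, hx2, v2, hv2, hdd⟩ := hdX
    rw [Set.mem_singleton_iff] at hx1 hx2
    subst hx1; subst hx2
    have hvmem : d - a ∈ Submodule.span ℝ σ := by
      have : d - a = v2 - v1 := by rw [← hda, ← hdd]; beta_reduce; abel
      rw [this]; exact Submodule.sub_mem _ hv2 hv1
    -- s + (d - a) ∈ σ
    have hsv : s + (d - a) ∈ σ := by
      refine hball _ ((hASmem _).mpr (Submodule.add_mem _ ((hASmem _).mp hsA) hvmem)) ?_
      rw [dist_eq_norm]
      have : s + (d - a) - s = d - a := by abel
      rw [this, ← dist_eq_norm]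
      rw [dist_comm]
      exact hdist
    -- downset
    refine hD (a - s) d hdD ?_
    have : d - (a - s) = s + (d - a) := by abel
    rw [this]
    exact hσ.1 hsv
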